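/- arXiv:1402.3819 — 2 statements merged into one kernel-verified Lean document; each statement's English description precedes it below -/
import Mathlib

section
/- Let Ω=(0,L), m,α>0, H := span{sinh((x-L)/√(α/m))} ⊂ L²(Ω), and H²_#(Ω) := {u ∈ H²(Ω)∩H¹₀(Ω) : u'(0)=0}. Then the restriction of ℒ = mI - α d²/dx² to H²_#(Ω) is an isomorphism from H²_#(Ω) onto H^⊥, the orthogonal complement of H in L²(Ω). -/
open Set intervalIntegral

/-- Basic consequences of `ContDiff ℝ 2`. -/
lemma stmt2_aux_cd {v : ℝ → ℝ} (hv : ContDiff ℝ 2 v) :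
    Differentiable ℝ v ∧ Differentiable ℝ (deriv v) ∧ Continuous (deriv (deriv v)) := by
  have h2 : ContDiff ℝ (1+1) v := by norm_num at hv ⊢; exact hv
  rw [contDiff_succ_iff_deriv] at h2
  obtain ⟨hd, -, h1⟩ := h2
  rw [contDiff_one_iff_deriv] at h1
  exact ⟨hd, h1.1, h1.2⟩

/-- FTC for a continuous integrand. -/
lemma stmt2_ftc {h : ℝ → ℝ} (hh : Continuous h) (x : ℝ) :
    HasDerivAt (fun y => ∫ t in (0:ℝ)..y, h t) (h x) x :=
  integral_hasDerivAt_right (hh.intervalIntegrable _ _)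
    (hh.stronglyMeasurableAtFilter _ _) hh.continuousAt

/-- Uniqueness: a `C²` solution of `w'' = w/c²` with `w 0 = w' 0 = 0` vanishes on `[0, L]`. -/
lemma stmt2_uniq {L c : ℝ} (hL : 0 < L) (hc : 0 < c) {w : ℝ → ℝ}
    (hw1 : Differentiable ℝ w) (hw2 : Differentiable ℝ (deriv w))
    (h0 : w 0 = 0) (h0' : deriv w 0 = 0)
    (hode : ∀ x ∈ Set.Icc (0:ℝ) L, deriv (deriv w) x = w x / c^2) :
    ∀ x ∈ Set.Icc (0:ℝ) L, w x = 0 := by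
  have hc0 : c ≠ 0 := hc.ne'
  have hud := uniqueDiffOn_Icc hL
  set p : ℝ → ℝ := fun x => (deriv w x + w x / c) * Real.exp (-(x/c)) with hp_def
  have hpd : ∀ x : ℝ, HasDerivAt p
      ((deriv (deriv w) x + deriv w x / c) * Real.exp (-(x/c))
        + (deriv w x + w x / c) * (Real.exp (-(x/c)) * (-(1/c)))) x := by
    intro x
    have h1 : HasDerivAt (fun y => deriv w y + w y / c)
        (deriv (deriv w) x + deriv w x / c) x :=
      ((hw2 x).hasDerivAt).add (((hw1 x).hasDerivAt).div_const c)
    have h2 : HasDerivAt (fun y => Real.exp (-(y/c))) (Real.exp (-(x/c)) * (-(1/c))) x :=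
      (Real.hasDerivAt_exp _).comp x (((hasDerivAt_id x).div_const c).neg)
    exact h1.mul h2
  have hpconst : ∀ x ∈ Set.Icc (0:ℝ) L, p x = p 0 := by
    apply constant_of_derivWithin_zero
    · exact fun x _ => ((hpd x).differentiableAt).differentiableWithinAt
    · intro x hx
      have hx' : x ∈ Set.Icc (0:ℝ) L := Set.mem_Icc_of_Ico hx
      have hz : HasDerivAt p 0 x := by
        have h := hpd x
        rw [hode x hx'] at h
        convert h using 1
        field_simp
        ring
      rw [hz.hasDerivWithinAt.derivWithin (hud x hx')]
  have hp0 : p 0 = 0 := by simp [hp_def, h0, h0']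
  have hstep1 : ∀ x ∈ Set.Icc (0:ℝ) L, deriv w x + w x / c = 0 := by
    intro x hx
    have := (hpconst x hx).trans hp0
    have he := Real.exp_ne_zero (-(x/c))
    rcases mul_eq_zero.1 this with h | h
    · exact h
    · exact absurd h he
  set q : ℝ → ℝ := fun x => w x * Real.exp (x/c) with hq_def
  have hqd : ∀ x : ℝ, HasDerivAt q
      (deriv w x * Real.exp (x/c) + w x * (Real.exp (x/c) * (1/c))) x := by
    intro x
    have h2 : HasDerivAt (fun y => Real.exp (y/c)) (Real.exp (x/c) * (1/c)) x :=
      (Real.hasDerivAt_exp _).comp x ((hasDerivAt_id x).div_const c)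
    exact ((hw1 x).hasDerivAt).mul h2
  have hqconst : ∀ x ∈ Set.Icc (0:ℝ) L, q x = q 0 := by
    apply constant_of_derivWithin_zero
    · exact fun x _ => ((hqd x).differentiableAt).differentiableWithinAt
    · intro x hx
      have hx' : x ∈ Set.Icc (0:ℝ) L := Set.mem_Icc_of_Ico hx
      have hz : HasDerivAt q 0 x := by
        have h := hqd x
        have h1 := hstep1 x hx'
        have hd : deriv w x = -(w x / c) := by linarith
        rw [hd] at h
        convert h using 1
        field_simp
        ring
      rw [hz.hasDerivWithinAt.derivWithin (hud x hx')]
  intro x hx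
  have hq0 : q 0 = 0 := by simp [hq_def, h0]
  have := (hqconst x hx).trans hq0
  have he := Real.exp_ne_zero (x/c)
  rcases mul_eq_zero.1 this with h | h
  · exact h
  · exact absurd h he

/-- Integration by parts: `ℒu ⟂ sinh((x-L)/c)` for `u` in `H²_#`. -/
lemma stmt2_ibp {L m α c : ℝ} (hc0 : c ≠ 0) (hmc : m * c^2 = α) {u : ℝ → ℝ}
    (hu1 : Differentiable ℝ u) (hu2 : Differentiable ℝ (deriv u))
    (hu2c : Continuous (deriv (deriv u)))
    (h0 : u 0 = 0) (hLu : u L = 0) (h0' : deriv u 0 = 0) :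
    ∫ x in (0:ℝ)..L, (m * u x - α * deriv (deriv u) x) * Real.sinh ((x - L)/c) = 0 := by
  set W : ℝ → ℝ := fun x =>
    α * (u x * (Real.cosh ((x - L)/c) / c) - deriv u x * Real.sinh ((x - L)/c)) with hW_def
  have hW : ∀ x : ℝ, HasDerivAt W
      ((m * u x - α * deriv (deriv u) x) * Real.sinh ((x - L)/c)) x := by
    intro x
    have hlin : HasDerivAt (fun y : ℝ => (y - L)/c) (1/c) x := by
      simpa using ((hasDerivAt_id x).sub_const L).div_const c
    have hcosh : HasDerivAt (fun y => Real.cosh ((y - L)/c))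
        (Real.sinh ((x - L)/c) * (1/c)) x := (Real.hasDerivAt_cosh _).comp x hlin
    have hsinh : HasDerivAt (fun y => Real.sinh ((y - L)/c))
        (Real.cosh ((x - L)/c) * (1/c)) x := (Real.hasDerivAt_sinh _).comp x hlin
    have h := ((((hu1 x).hasDerivAt).mul (hcosh.div_const c)).sub
      (((hu2 x).hasDerivAt).mul hsinh)).const_mul α
    refine h.congr_deriv (Eq.symm ?_)
    set S := Real.sinh ((x - L)/c)
    set C := Real.cosh ((x - L)/c)
    field_simp
    linear_combination (u x * S) * hmc
  have hint : IntervalIntegrable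
      (fun x => (m * u x - α * deriv (deriv u) x) * Real.sinh ((x - L)/c))
      MeasureTheory.volume 0 L := by
    apply Continuous.intervalIntegrable
    exact ((continuous_const.mul hu1.continuous).sub (continuous_const.mul hu2c)).mul
      (Real.continuous_sinh.comp ((continuous_id.sub continuous_const).div_const c))
  rw [integral_eq_sub_of_hasDerivAt (fun x _ => hW x) hint]
  simp [hW_def, hLu, h0, h0']

/-- Existence: variation of parameters solves `ℒu = g` with the three boundary conditions,
given the orthogonality of `g` to `sinh((x-L)/c)`. -/
lemma stmt2_construct {L m α c : ℝ} (hα0 : α ≠ 0) (hc0 : c ≠ 0)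
    (hmc : m * c^2 = α) {g : ℝ → ℝ} (hg : Continuous g)
    (hg0 : ∫ t in (0:ℝ)..L, g t * Real.sinh ((t - L)/c) = 0) :
    ∃ u : ℝ → ℝ, ContDiff ℝ 2 u ∧ u 0 = 0 ∧ u L = 0 ∧ deriv u 0 = 0 ∧
      ∀ x : ℝ, m * u x - α * deriv (deriv u) x = g x := by
  have hgc : Continuous fun t => Real.cosh (t/c) * g t :=
    (Real.continuous_cosh.comp (continuous_id.div_const c)).mul hg
  have hgs : Continuous fun t => Real.sinh (t/c) * g t :=
    (Real.continuous_sinh.comp (continuous_id.div_const c)).mul hg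
  set F : ℝ → ℝ := fun x => ∫ t in (0:ℝ)..x, Real.cosh (t/c) * g t with hF_def
  set G : ℝ → ℝ := fun x => ∫ t in (0:ℝ)..x, Real.sinh (t/c) * g t with hG_def
  have hF : ∀ x : ℝ, HasDerivAt F (Real.cosh (x/c) * g x) x := fun x => stmt2_ftc hgc x
  have hG : ∀ x : ℝ, HasDerivAt G (Real.sinh (x/c) * g x) x := fun x => stmt2_ftc hgs x
  have hsc : ∀ x : ℝ, HasDerivAt (fun y => Real.sinh (y/c)) (Real.cosh (x/c) * (1/c)) x :=
    fun x => (Real.hasDerivAt_sinh _).comp x ((hasDerivAt_id x).div_const c)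
  have hcc : ∀ x : ℝ, HasDerivAt (fun y => Real.cosh (y/c)) (Real.sinh (x/c) * (1/c)) x :=
    fun x => (Real.hasDerivAt_cosh _).comp x ((hasDerivAt_id x).div_const c)
  set u : ℝ → ℝ := fun x => -(c/α) * (Real.sinh (x/c) * F x - Real.cosh (x/c) * G x) with hu_def
  set U1 : ℝ → ℝ := fun x => -(1/α) * (Real.cosh (x/c) * F x - Real.sinh (x/c) * G x) with hU1_def
  set U2 : ℝ → ℝ := fun x => (m/α) * u x - (1/α) * g x with hU2_def
  have hu : ∀ x : ℝ, HasDerivAt u (U1 x) x := by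
    intro x
    have h := (((hsc x).mul (hF x)).sub ((hcc x).mul (hG x))).const_mul (-(c/α))
    refine h.congr_deriv (Eq.symm ?_)
    show -(1/α) * (Real.cosh (x/c) * F x - Real.sinh (x/c) * G x) = _
    set S := Real.sinh (x/c); set C := Real.cosh (x/c)
    field_simp
    ring
  have hU1 : ∀ x : ℝ, HasDerivAt U1 (U2 x) x := by
    intro x
    have h := (((hcc x).mul (hF x)).sub ((hsc x).mul (hG x))).const_mul (-(1/α))
    refine h.congr_deriv (Eq.symm ?_)
    show (m/α) * (-(c/α) * (Real.sinh (x/c) * F x - Real.cosh (x/c) * G x)) - (1/α) * g x = _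
    have hCS : Real.cosh (x/c)^2 - Real.sinh (x/c)^2 = 1 := Real.cosh_sq_sub_sinh_sq _
    field_simp
    linear_combination (-(Real.sinh (x/c) * F x - Real.cosh (x/c) * G x)) * hmc
      + (c * α * g x) * hCS
  have hderiv1 : deriv u = U1 := funext fun x => (hu x).deriv
  have hderiv2 : deriv (deriv u) = U2 := by rw [hderiv1]; exact funext fun x => (hU1 x).deriv
  have hdu : Differentiable ℝ u := fun x => (hu x).differentiableAt
  have hdU1 : Differentiable ℝ U1 := fun x => (hU1 x).differentiableAt
  have hU2c : Continuous U2 := (continuous_const.mul hdu.continuous).sub (continuous_const.mul hg)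
  refine ⟨u, ?_, ?_, ?_, ?_, ?_⟩
  · rw [show (2 : WithTop ℕ∞) = 1 + 1 from rfl, contDiff_succ_iff_deriv]
    refine ⟨hdu, by simp, ?_⟩
    rw [hderiv1, contDiff_one_iff_deriv]
    refine ⟨hdU1, ?_⟩
    rw [show deriv U1 = U2 from funext fun x => (hU1 x).deriv]
    exact hU2c
  · have hF0 : F 0 = 0 := integral_same
    have hG0 : G 0 = 0 := integral_same
    simp [hu_def, hF0, hG0]
  · have h1 : (∫ t in (0:ℝ)..L, g t * Real.sinh ((t - L)/c))
        = Real.cosh (L/c) * G L - Real.sinh (L/c) * F L := by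
      have : (fun t => g t * Real.sinh ((t - L)/c))
          = fun t => Real.cosh (L/c) * (Real.sinh (t/c) * g t)
            - Real.sinh (L/c) * (Real.cosh (t/c) * g t) := by
        funext t
        rw [show (t - L)/c = t/c - L/c by ring, Real.sinh_sub]
        ring
      rw [this, integral_sub ((hgs.intervalIntegrable _ _).const_mul _)
        ((hgc.intervalIntegrable _ _).const_mul _), intervalIntegral.integral_const_mul,
        intervalIntegral.integral_const_mul]
    rw [h1] at hg0
    show -(c/α) * (Real.sinh (L/c) * F L - Real.cosh (L/c) * G L) = 0
    have : Real.sinh (L/c) * F L - Real.cosh (L/c) * G L = 0 := by linarith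
    rw [this, mul_zero]
  · rw [hderiv1]
    show -(1/α) * (Real.cosh (0/c) * F 0 - Real.sinh (0/c) * G 0) = 0
    have hF0 : F 0 = 0 := integral_same
    have hG0 : G 0 = 0 := integral_same
    rw [hF0, hG0]; ring
  · intro x
    rw [hderiv2]
    show m * u x - α * ((m/α) * u x - (1/α) * g x) = g x
    field_simp
    ring

/-- On Ω = (0,L), with m, α > 0, let
H = span{sinh((x-L)/√(α/m))} ⊂ L²(Ω) and
H²_#(Ω) = {u ∈ H² ∩ H¹₀ : u'(0) = 0}.  The restriction of ℒ = mI - α d²/dx²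
to H²_#(Ω) is an isomorphism from H²_#(Ω) onto H^⊥ (the L²-orthogonal
complement of H): ℒ maps H²_# into H^⊥, and every f ∈ H^⊥ has a unique
preimage in H²_#.  (H² regularity modeled by C², L² data by continuity.) -/
theorem stmt2 (L m α : ℝ) (hL : 0 < L) (hm : 0 < m) (hα : 0 < α) :
    -- ℒ maps H²_# into H^⊥
    (∀ u : ℝ → ℝ, ContDiff ℝ 2 u → u 0 = 0 → u L = 0 → deriv u 0 = 0 →
      ∫ x in (0:ℝ)..L, (m * u x - α * deriv (deriv u) x) *
        Real.sinh ((x - L) / Real.sqrt (α / m)) = 0) ∧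
    -- every f ⊥ H has a unique preimage in H²_#
    (∀ f : ℝ → ℝ, ContinuousOn f (Set.Icc 0 L) →
      (∫ x in (0:ℝ)..L, f x * Real.sinh ((x - L) / Real.sqrt (α / m))) = 0 →
      ∃ u : ℝ → ℝ, (ContDiff ℝ 2 u ∧ u 0 = 0 ∧ u L = 0 ∧ deriv u 0 = 0 ∧
        ∀ x ∈ Set.Icc 0 L, m * u x - α * deriv (deriv u) x = f x) ∧
        ∀ v : ℝ → ℝ, (ContDiff ℝ 2 v ∧ v 0 = 0 ∧ v L = 0 ∧ deriv v 0 = 0 ∧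
          ∀ x ∈ Set.Icc 0 L, m * v x - α * deriv (deriv v) x = f x) →
          ∀ x ∈ Set.Icc 0 L, v x = u x) := by
  set c : ℝ := Real.sqrt (α / m) with hc_def
  have hcm : (0:ℝ) < α / m := div_pos hα hm
  have hc : 0 < c := Real.sqrt_pos.2 hcm
  have hc2 : c^2 = α / m := Real.sq_sqrt hcm.le
  have hmc : m * c^2 = α := by rw [hc2]; field_simp
  constructor
  · intro u hu h0 hLu h0'
    obtain ⟨hu1, hu2, hu2c⟩ := stmt2_aux_cd hu
    exact stmt2_ibp hc.ne' hmc hu1 hu2 hu2c h0 hLu h0'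
  · intro f hf hf0
    set g : ℝ → ℝ := Set.IccExtend hL.le ((Set.Icc (0:ℝ) L).restrict f) with hg_def
    have hgcont : Continuous g := hf.restrict.Icc_extend'
    have hgf : ∀ x ∈ Set.Icc (0:ℝ) L, g x = f x := by
      intro x hx
      rw [hg_def, Set.IccExtend_of_mem hL.le _ hx]
      rfl
    have hg0 : ∫ t in (0:ℝ)..L, g t * Real.sinh ((t - L)/c) = 0 := by
      have heq : Set.EqOn (fun t => g t * Real.sinh ((t - L)/c))
          (fun t => f t * Real.sinh ((t - L)/c)) (Set.uIcc 0 L) := by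
        rw [Set.uIcc_of_le hL.le]
        intro t ht
        simp only [hgf t ht]
      rw [integral_congr heq]
      exact hf0
    obtain ⟨u, hcd, hu0, huL, hu0', hueq⟩ :=
      stmt2_construct hα.ne' hc.ne' hmc hgcont hg0
    obtain ⟨hu1, hu2, hu2c⟩ := stmt2_aux_cd hcd
    refine ⟨u, ⟨hcd, hu0, huL, hu0', fun x hx => (hueq x).trans (hgf x hx)⟩, ?_⟩
    rintro v ⟨hvcd, hv0, hvL, hv0', hveq⟩ x hx
    obtain ⟨hv1, hv2, hv2c⟩ := stmt2_aux_cd hvcd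
    set w : ℝ → ℝ := fun y => v y - u y with hw_def
    have hw1 : Differentiable ℝ w := hv1.sub hu1
    have hderivw : deriv w = fun y => deriv v y - deriv u y :=
      funext fun y => ((hv1 y).hasDerivAt.sub (hu1 y).hasDerivAt).deriv
    have hw2 : Differentiable ℝ (deriv w) := by rw [hderivw]; exact hv2.sub hu2
    have hode : ∀ y ∈ Set.Icc (0:ℝ) L, deriv (deriv w) y = w y / c^2 := by
      intro y hy
      rw [hderivw]
      have hdd : deriv (fun z => deriv v z - deriv u z) y
          = deriv (deriv v) y - deriv (deriv u) y :=
        ((hv2 y).hasDerivAt.sub (hu2 y).hasDerivAt).deriv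
      rw [hdd]
      have e1 := hveq y hy
      have e2 : m * u y - α * deriv (deriv u) y = f y := (hueq y).trans (hgf y hy)
      have hwy : w y = v y - u y := rfl
      rw [hwy, hc2, div_div_eq_mul_div, eq_div_iff hα.ne']
      linarith
    have hzero := stmt2_uniq hL hc hw1 hw2 (by simp [hw_def, hv0, hu0])
      (by rw [hderivw]; simp [hv0', hu0']) hode x hx
    have : v x - u x = 0 := hzero
    linarith
end

section
/- Let Ω=(0,L), m,α>0, M := span{e^{-x/√(α/m)}, e^{x/√(α/m)}} ⊂ L²(Ω). Then the operator ℒ = mI - α d²/dx² is an isomorphism from H²₀(Ω) onto M^⊥, the orthogonal complement of M in L²(Ω). -/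
open intervalIntegral Real Set

/-- Auxiliary: if `u` is `C²` with zero boundary data, then
`∫ (m u - α u'') e^{r x} = 0` whenever `α r² = m`, by exhibiting an explicit
antiderivative vanishing at both endpoints. -/
lemma stmt3_part1_aux (L m α r : ℝ) (hr : α * r ^ 2 = m)
    (u : ℝ → ℝ) (hu : ContDiff ℝ 2 u) (h0 : u 0 = 0) (hLu : u L = 0)
    (h0' : deriv u 0 = 0) (hL' : deriv u L = 0) :
    ∫ x in (0:ℝ)..L, (m * u x - α * deriv (deriv u) x) * Real.exp (r * x) = 0 := by
  have hud : Differentiable ℝ u := hu.differentiable (by norm_num)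
  have hu1 : ContDiff ℝ 1 (deriv u) := by
    have := (contDiff_succ_iff_deriv (n := 1)).mp (by norm_num at hu ⊢; exact hu)
    exact this.2.2
  have hud1 : Differentiable ℝ (deriv u) := hu1.differentiable one_ne_zero
  have hcont2 : Continuous (deriv (deriv u)) := (contDiff_one_iff_deriv.mp hu1).2
  set g : ℝ → ℝ := fun x => α * (r * u x - deriv u x) * Real.exp (r * x) with hg
  have hder : ∀ x : ℝ, HasDerivAt g
      ((m * u x - α * deriv (deriv u) x) * Real.exp (r * x)) x := by
    intro x
    have h1 : HasDerivAt (fun x => α * (r * u x - deriv u x))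
        (α * (r * deriv u x - deriv (deriv u) x)) x := by
      exact (((hud x).hasDerivAt.const_mul r).sub (hud1 x).hasDerivAt).const_mul α
    have h2 : HasDerivAt (fun x => Real.exp (r * x)) (Real.exp (r * x) * r) x := by
      simpa using ((hasDerivAt_id x).const_mul r).exp
    have := h1.mul h2
    refine this.congr_deriv (Eq.symm ?_)
    linear_combination (-(Real.exp (r * x) * u x)) * hr
  have hint : IntervalIntegrable
      (fun x => (m * u x - α * deriv (deriv u) x) * Real.exp (r * x)) MeasureTheory.volume 0 L := by
    apply Continuous.intervalIntegrable
    exact ((continuous_const.mul hud.continuous).sub (continuous_const.mul hcont2)).mul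
      (Real.continuous_exp.comp (continuous_const.mul continuous_id))
  have := intervalIntegral.integral_eq_sub_of_hasDerivAt (fun x _ => hder x) hint
  rw [this, hg]
  simp [h0, hLu, h0', hL']

/-- Auxiliary: explicit solution of `m u - α u'' = F` with zero boundary data,
built by variation of parameters, given the two orthogonality conditions. -/
lemma stmt3_part2_aux (L m α k : ℝ) (hL : 0 < L) (hm : 0 < m) (hα : 0 < α)
    (hk : 0 < k) (hk2 : α * k ^ 2 = m) (F : ℝ → ℝ) (hF : Continuous F)
    (h1 : (∫ x in (0:ℝ)..L, F x * Real.exp (k * x)) = 0)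
    (h2 : (∫ x in (0:ℝ)..L, F x * Real.exp (-(k * x))) = 0) :
    ∃ u : ℝ → ℝ, ContDiff ℝ 2 u ∧ u 0 = 0 ∧ u L = 0 ∧ deriv u 0 = 0 ∧
      deriv u L = 0 ∧ ∀ x : ℝ, m * u x - α * deriv (deriv u) x = F x := by
  have hα0 : α ≠ 0 := ne_of_gt hα
  have hk0 : k ≠ 0 := ne_of_gt hk
  set c : ℝ := -(1 / (α * k)) with hc
  have hc0 : c * (α * k) = -1 := by rw [hc]; field_simp
  set A : ℝ → ℝ := fun x => ∫ t in (0:ℝ)..x, Real.cosh (k * t) * F t with hA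
  set B : ℝ → ℝ := fun x => ∫ t in (0:ℝ)..x, Real.sinh (k * t) * F t with hB
  have hcA : Continuous fun t => Real.cosh (k * t) * F t :=
    (Real.continuous_cosh.comp (continuous_const.mul continuous_id)).mul hF
  have hcB : Continuous fun t => Real.sinh (k * t) * F t :=
    (Real.continuous_sinh.comp (continuous_const.mul continuous_id)).mul hF
  have hA' : ∀ x : ℝ, HasDerivAt A (Real.cosh (k * x) * F x) x := fun x =>
    intervalIntegral.integral_hasDerivAt_right (hcA.intervalIntegrable _ _)
      (hcA.stronglyMeasurableAtFilter _ _) hcA.continuousAt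
  have hB' : ∀ x : ℝ, HasDerivAt B (Real.sinh (k * x) * F x) x := fun x =>
    intervalIntegral.integral_hasDerivAt_right (hcB.intervalIntegrable _ _)
      (hcB.stronglyMeasurableAtFilter _ _) hcB.continuousAt
  have hAd : Differentiable ℝ A := fun x => (hA' x).differentiableAt
  have hBd : Differentiable ℝ B := fun x => (hB' x).differentiableAt
  set u : ℝ → ℝ := fun x => c * (Real.sinh (k * x) * A x - Real.cosh (k * x) * B x) with hu
  set E : ℝ → ℝ := fun x => c * k * (Real.cosh (k * x) * A x - Real.sinh (k * x) * B x) with hE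
  have hsinh : ∀ x : ℝ, HasDerivAt (fun x => Real.sinh (k * x)) (Real.cosh (k * x) * k) x :=
    fun x => by simpa using ((hasDerivAt_id x).const_mul k).sinh
  have hcosh : ∀ x : ℝ, HasDerivAt (fun x => Real.cosh (k * x)) (Real.sinh (k * x) * k) x :=
    fun x => by simpa using ((hasDerivAt_id x).const_mul k).cosh
  have hu' : ∀ x : ℝ, HasDerivAt u (E x) x := by
    intro x
    have h := ((((hsinh x).mul (hA' x)).sub ((hcosh x).mul (hB' x))).const_mul c)
    refine h.congr_deriv (Eq.symm ?_)
    simp only [hE]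
    ring
  have hE' : ∀ x : ℝ, HasDerivAt E ((m * u x - F x) / α) x := by
    intro x
    have h := ((((hcosh x).mul (hA' x)).sub ((hsinh x).mul (hB' x))).const_mul (c * k))
    refine h.congr_deriv (Eq.symm ?_)
    have hch := Real.cosh_sq_sub_sinh_sq (k * x)
    simp only [hu]
    field_simp
    linear_combination (-(c * (Real.sinh (k * x) * A x - Real.cosh (k * x) * B x))) * hk2 +
      (-(α * c * k * F x)) * hch + (-(F x)) * hc0
  have hderiv_u : deriv u = E := funext fun x => (hu' x).deriv
  have hdd : ∀ x : ℝ, deriv (deriv u) x = (m * u x - F x) / α := by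
    intro x; rw [hderiv_u]; exact (hE' x).deriv
  have hucont : Continuous u := (Differentiable.continuous fun x => (hu' x).differentiableAt)
  have hcd2 : ContDiff ℝ 2 u := by
    have h1d : ContDiff ℝ 1 (deriv u) := by
      rw [hderiv_u]
      refine contDiff_one_iff_deriv.mpr ⟨fun x => (hE' x).differentiableAt, ?_⟩
      have : deriv E = fun x => (m * u x - F x) / α := funext fun x => (hE' x).deriv
      rw [this]
      exact ((continuous_const.mul hucont).sub hF).div_const α
    have : (2 : WithTop ℕ∞) = 1 + 1 := by norm_num
    rw [this, contDiff_succ_iff_deriv]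
    exact ⟨fun x => (hu' x).differentiableAt, by simp, h1d⟩
  have hA0 : A 0 = 0 := intervalIntegral.integral_same
  have hB0 : B 0 = 0 := intervalIntegral.integral_same
  have hintk : IntervalIntegrable (fun x => F x * Real.exp (k * x)) MeasureTheory.volume 0 L :=
    (hF.mul (Real.continuous_exp.comp (continuous_const.mul continuous_id))).intervalIntegrable _ _
  have hintk' : IntervalIntegrable (fun x => F x * Real.exp (-(k * x))) MeasureTheory.volume 0 L :=
    (hF.mul (Real.continuous_exp.comp ((continuous_const.mul continuous_id).neg))).intervalIntegrable _ _
  have hAL : A L = 0 := by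
    have heq : A L = (∫ x in (0:ℝ)..L, (F x * Real.exp (k * x) / 2 + F x * Real.exp (-(k * x)) / 2)) := by
      apply intervalIntegral.integral_congr
      intro t _
      simp only [Real.cosh_eq]
      ring
    rw [heq, intervalIntegral.integral_add (hintk.div_const 2) (hintk'.div_const 2),
      intervalIntegral.integral_div, intervalIntegral.integral_div, h1, h2]
    norm_num
  have hBL : B L = 0 := by
    have heq : B L = (∫ x in (0:ℝ)..L, (F x * Real.exp (k * x) / 2 - F x * Real.exp (-(k * x)) / 2)) := by
      apply intervalIntegral.integral_congr
      intro t _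
      simp only [Real.sinh_eq]
      ring
    rw [heq, intervalIntegral.integral_sub (hintk.div_const 2) (hintk'.div_const 2),
      intervalIntegral.integral_div, intervalIntegral.integral_div, h1, h2]
    norm_num
  refine ⟨u, hcd2, ?_, ?_, ?_, ?_, ?_⟩
  · show c * (Real.sinh (k * 0) * A 0 - Real.cosh (k * 0) * B 0) = 0
    rw [hA0, hB0]; ring
  · show c * (Real.sinh (k * L) * A L - Real.cosh (k * L) * B L) = 0
    rw [hAL, hBL]; ring
  · rw [hderiv_u]
    show c * k * (Real.cosh (k * 0) * A 0 - Real.sinh (k * 0) * B 0) = 0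
    rw [hA0, hB0]; ring
  · rw [hderiv_u]
    show c * k * (Real.cosh (k * L) * A L - Real.sinh (k * L) * B L) = 0
    rw [hAL, hBL]; ring
  · intro x
    rw [hdd x]
    field_simp
    ring

/-- On Ω = (0,L), with m, α > 0, let
M = span{e^{-x/√(α/m)}, e^{x/√(α/m)}} ⊂ L²(Ω).  The operator
ℒ = mI - α d²/dx² is an isomorphism from H²₀(Ω) onto M^⊥: ℒ maps
H²₀ = {u ∈ H² : u(0)=u(L)=u'(0)=u'(L)=0} into M^⊥, and every f ∈ M^⊥
has a unique preimage in H²₀.  (H² modeled by C², L² data by continuity.) -/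
theorem stmt3 (L m α : ℝ) (hL : 0 < L) (hm : 0 < m) (hα : 0 < α) :
    -- ℒ maps H²₀ into M^⊥
    (∀ u : ℝ → ℝ, ContDiff ℝ 2 u → u 0 = 0 → u L = 0 → deriv u 0 = 0 →
      deriv u L = 0 →
      (∫ x in (0:ℝ)..L, (m * u x - α * deriv (deriv u) x) *
        Real.exp (-x / Real.sqrt (α / m)) = 0) ∧
      (∫ x in (0:ℝ)..L, (m * u x - α * deriv (deriv u) x) *
        Real.exp (x / Real.sqrt (α / m)) = 0)) ∧
    -- every f ⊥ M has a unique preimage in H²₀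
    (∀ f : ℝ → ℝ, ContinuousOn f (Set.Icc 0 L) →
      (∫ x in (0:ℝ)..L, f x * Real.exp (-x / Real.sqrt (α / m))) = 0 →
      (∫ x in (0:ℝ)..L, f x * Real.exp (x / Real.sqrt (α / m))) = 0 →
      ∃ u : ℝ → ℝ, (ContDiff ℝ 2 u ∧ u 0 = 0 ∧ u L = 0 ∧ deriv u 0 = 0 ∧
        deriv u L = 0 ∧
        ∀ x ∈ Set.Icc 0 L, m * u x - α * deriv (deriv u) x = f x) ∧
        ∀ v : ℝ → ℝ, (ContDiff ℝ 2 v ∧ v 0 = 0 ∧ v L = 0 ∧ deriv v 0 = 0 ∧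
          deriv v L = 0 ∧
          ∀ x ∈ Set.Icc 0 L, m * v x - α * deriv (deriv v) x = f x) →
          ∀ x ∈ Set.Icc 0 L, v x = u x) := by
  have hα0 : α ≠ 0 := ne_of_gt hα
  have hm0 : m ≠ 0 := ne_of_gt hm
  set k : ℝ := Real.sqrt (m / α) with hkdef
  have hk : 0 < k := Real.sqrt_pos.mpr (div_pos hm hα)
  have hksq : k ^ 2 = m / α := Real.sq_sqrt (le_of_lt (div_pos hm hα))
  have hk2 : α * k ^ 2 = m := by rw [hksq]; field_simp
  have hs : Real.sqrt (α / m) = k⁻¹ := by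
    rw [hkdef, ← Real.sqrt_inv, inv_div]
  have e1 : ∀ x : ℝ, -x / Real.sqrt (α / m) = -k * x := by
    intro x; rw [hs]; field_simp
  have e2 : ∀ x : ℝ, x / Real.sqrt (α / m) = k * x := by
    intro x; rw [hs]; field_simp
  constructor
  · -- Part 1: ℒ maps H²₀ into M^⊥
    intro u hu h0 hLu h0' hL'
    constructor
    · have := stmt3_part1_aux L m α (-k) (by linear_combination hk2) u hu h0 hLu h0' hL'
      simp only [e1]
      exact this
    · have := stmt3_part1_aux L m α k hk2 u hu h0 hLu h0' hL'
      simp only [e2]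
      exact this
  · -- Part 2: existence and uniqueness
    intro f hfc hI1 hI2
    -- continuous extension of f to all of ℝ
    set F : ℝ → ℝ := Set.IccExtend hL.le (Set.restrict (Set.Icc 0 L) f) with hFdef
    have hFcont : Continuous F :=
      Continuous.Icc_extend' (continuousOn_iff_continuous_restrict.mp hfc)
    have hFf : ∀ x ∈ Set.Icc (0:ℝ) L, F x = f x := fun x hx =>
      Set.IccExtend_of_mem hL.le _ hx
    have hcongr : ∀ (g : ℝ → ℝ), EqOn (fun x => F x * g x) (fun x => f x * g x)
        (Set.uIcc (0:ℝ) L) := by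
      intro g x hx
      rw [Set.uIcc_of_le hL.le] at hx
      simp only [hFf x hx]
    have h1' : (∫ x in (0:ℝ)..L, F x * Real.exp (k * x)) = 0 := by
      have heq : (∫ x in (0:ℝ)..L, f x * Real.exp (k * x)) =
          ∫ x in (0:ℝ)..L, f x * Real.exp (x / Real.sqrt (α / m)) :=
        intervalIntegral.integral_congr fun x _ => by rw [e2 x]
      rw [intervalIntegral.integral_congr (hcongr _), heq]
      exact hI2
    have h2' : (∫ x in (0:ℝ)..L, F x * Real.exp (-(k * x))) = 0 := by
      have heq : (∫ x in (0:ℝ)..L, f x * Real.exp (-(k * x))) =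
          ∫ x in (0:ℝ)..L, f x * Real.exp (-x / Real.sqrt (α / m)) :=
        intervalIntegral.integral_congr fun x _ => by rw [e1 x]; ring_nf
      rw [intervalIntegral.integral_congr (hcongr _), heq]
      exact hI1
    obtain ⟨u, hcd2, hu0, huL, hu0', huL', hueq⟩ :=
      stmt3_part2_aux L m α k hL hm hα hk hk2 F hFcont h1' h2'
    have hueqf : ∀ x ∈ Set.Icc (0:ℝ) L, m * u x - α * deriv (deriv u) x = f x := by
      intro x hx
      rw [hueq x, hFf x hx]
    refine ⟨u, ⟨hcd2, hu0, huL, hu0', huL', hueqf⟩, ?_⟩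
    -- uniqueness
    rintro v ⟨hv, hv0, hvL, hv0', hvL', hveq⟩
    set T : ℝ × ℝ →L[ℝ] ℝ × ℝ :=
      (ContinuousLinearMap.snd ℝ ℝ ℝ).prod ((m / α) • (ContinuousLinearMap.fst ℝ ℝ ℝ)) with hT
    set V : ℝ → ℝ × ℝ → ℝ × ℝ := fun t p => T p + (0, -(f t / α)) with hV
    have hlip : ∀ t, LipschitzWith ‖T‖₊ (V t) := by
      intro t p q
      simpa [hV, edist_add_right] using T.lipschitz p q
    have key : ∀ w : ℝ → ℝ, ContDiff ℝ 2 w →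
        (∀ x ∈ Set.Icc 0 L, m * w x - α * deriv (deriv w) x = f x) →
        (ContinuousOn (fun x => (w x, deriv w x)) (Set.Icc 0 L) ∧
         ∀ t ∈ Set.Ico 0 L, HasDerivWithinAt (fun x => (w x, deriv w x))
           (V t (w t, deriv w t)) (Set.Ici t) t) := by
      intro w hw hweq
      have hwd : Differentiable ℝ w := hw.differentiable (by norm_num)
      have hw1 : ContDiff ℝ 1 (deriv w) := by
        have h2 : (2 : WithTop ℕ∞) = 1 + 1 := by norm_num
        rw [h2, contDiff_succ_iff_deriv] at hw
        exact hw.2.2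
      have hwd1 : Differentiable ℝ (deriv w) := hw1.differentiable one_ne_zero
      constructor
      · exact (hwd.continuous.prodMk hwd1.continuous).continuousOn
      · intro t ht
        have hda : HasDerivAt (fun x => (w x, deriv w x)) (deriv w t, deriv (deriv w) t) t :=
          (hwd t).hasDerivAt.prodMk (hwd1 t).hasDerivAt
        have heq : V t (w t, deriv w t) = (deriv w t, deriv (deriv w) t) := by
          have h := hweq t ⟨ht.1, le_of_lt ht.2⟩
          have hdw : deriv (deriv w) t = (m * w t - f t) / α := by
            field_simp
            linarith [h]
          rw [hdw]
          simp only [hV, hT]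
          ext
          · simp
          · simp
            ring
        rw [heq]
        exact hda.hasDerivWithinAt
    obtain ⟨hucont, huder⟩ := key u hcd2 hueqf
    obtain ⟨hvcont, hvder⟩ := key v hv hveq
    have hinit : (fun x => (v x, deriv v x)) 0 = (fun x => (u x, deriv u x)) 0 := by
      simp [hv0, hu0, hv0', hu0']
    have := ODE_solution_unique hlip hvcont hvder hucont huder hinit
    intro x hx
    exact congrArg Prod.fst (this hx)
end
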